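/- (Theorem 2.1) Let q be a real number with 0 < q < 1, let α > 0 be real, let h be a positive integer, let x > 0 be real, and let a and b be odd positive integers. Then for every complex s, ([2]_{q^b} / [a]_{q^α}^{s}) · ∑_{i=0}^{a-1} (-1)^i q^{ibh} ζ̃_{q^a}^{(α,h)}(s, bx + bi/a) = ([2]_{q^a} / [b]_{q^α}^{s}) · ∑_{i=0}^{b-1} (-1)^i q^{iah} ζ̃_{q^b}^{(α,h)}(s, ax + ai/b), where [a]_{q^α}^{s} = exp(s · log [a]_{q^α}). -/

import Mathlib

/-- The `q`-number `[x]_q = (1 - q^x)/(1 - q)` (real exponent, via `rpow`). -/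
noncomputable def qnum (q x : ℝ) : ℝ := (1 - q ^ x) / (1 - q)

/-- The `m`-th term of the weighted `(h,q)`-zeta series:
`(-1)^m q^{mh} [m+x]_{q^α}^{-s}` where `t^{-s} = exp(-s · log t)` with the real log. -/
noncomputable def zetaTerm (q α : ℝ) (h : ℕ) (x : ℝ) (s : ℂ) (m : ℕ) : ℂ :=
  (-1 : ℂ) ^ m * (q : ℂ) ^ (m * h) *
    Complex.exp (-s * (Real.log (qnum (q ^ α) ((m : ℝ) + x)) : ℂ))

/-- The weighted `(h,q)`-zeta function
`ζ̃_q^{(α,h)}(s,x) = [2]_q ∑_{m≥0} (-1)^m q^{mh} [m+x]_{q^α}^{-s}`. -/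
noncomputable def hqZeta (q α : ℝ) (h : ℕ) (x : ℝ) (s : ℂ) : ℂ :=
  (qnum q 2 : ℂ) * ∑' m : ℕ, zetaTerm q α h x s m

/-- the symmetric term `(-1)^N q^{Nh} [N + c]_{q^α}^{-s}` -/
noncomputable def Fterm (q α : ℝ) (h : ℕ) (s : ℂ) (c : ℝ) (N : ℕ) : ℂ :=
  (-1 : ℂ) ^ N * (q : ℂ) ^ (N * h) *
    Complex.exp (-s * (Real.log (qnum (q ^ α) ((N : ℝ) + c)) : ℂ))

lemma qnum_pos {Q y : ℝ} (hQ0 : 0 < Q) (hQ1 : Q < 1) (hy : 0 < y) : 0 < qnum Q y := by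
  have h1 : Q ^ y < 1 := Real.rpow_lt_one hQ0.le hQ1 hy
  exact div_pos (by linarith) (by linarith)

lemma qnum_scale (q α : ℝ) (hq0 : 0 < q) (hq1 : q < 1) (hα : 0 < α) (a : ℕ) (ha : 0 < a)
    (y : ℝ) :
    qnum ((q ^ a : ℝ) ^ α) y = qnum (q ^ α) ((a : ℝ) * y) / qnum (q ^ α) (a : ℝ) := by
  have hQ0 : (0:ℝ) < q ^ α := Real.rpow_pos_of_pos hq0 α
  have hQ1 : q ^ α < 1 := Real.rpow_lt_one hq0.le hq1 hα
  have e1 : ((q ^ a : ℝ)) ^ α = q ^ ((a : ℝ) * α) := by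
    rw [← Real.rpow_natCast q a, ← Real.rpow_mul hq0.le]
  have e2 : ((q ^ a : ℝ) ^ α) ^ y = (q ^ α) ^ ((a:ℝ) * y) := by
    rw [e1, ← Real.rpow_mul hq0.le, ← Real.rpow_mul hq0.le]
    congr 1; ring
  have e3 : (q ^ α) ^ ((a:ℝ)) = ((q ^ a : ℝ)) ^ α := by
    rw [e1, ← Real.rpow_mul hq0.le]
    congr 1; ring
  have h1a : (1:ℝ) - q ^ α ≠ 0 := by linarith
  have h1b : (1:ℝ) - (q ^ a : ℝ) ^ α ≠ 0 := by
    have : ((q ^ a : ℝ)) ^ α < 1 := by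
      rw [e1]
      exact Real.rpow_lt_one hq0.le hq1 (by positivity)
    linarith
  rw [qnum, qnum, qnum, e2, e3]
  field_simp


lemma term_eq (q α x : ℝ) (hq0 : 0 < q) (hq1 : q < 1) (hα : 0 < α) (h : ℕ)
    (hx : 0 < x) (a b : ℕ) (ha : 0 < a) (hb : 0 < b) (hao : Odd a) (hbo : Odd b)
    (s : ℂ) (i m : ℕ) :
    (-1 : ℂ) ^ i * (q : ℂ) ^ (i * b * h) *
        zetaTerm (q ^ a) α h ((b : ℝ) * x + (b : ℝ) * (i : ℝ) / (a : ℝ)) s m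
    = Complex.exp (s * (Real.log (qnum (q ^ α) (a : ℝ)) : ℂ)) *
        Fterm q α h s ((a : ℝ) * (b : ℝ) * x) (a * m + b * i) := by
  have hQ0 : (0:ℝ) < q ^ α := Real.rpow_pos_of_pos hq0 α
  have hQ1 : q ^ α < 1 := Real.rpow_lt_one hq0.le hq1 hα
  have ha' : (0:ℝ) < (a:ℝ) := by exact_mod_cast ha
  have hb' : (0:ℝ) < (b:ℝ) := by exact_mod_cast hb
  have harg : (a:ℝ) * ((m:ℝ) + ((b : ℝ) * x + (b : ℝ) * (i : ℝ) / (a : ℝ)))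
      = ((a * m + b * i : ℕ) : ℝ) + (a : ℝ) * (b : ℝ) * x := by
    push_cast
    field_simp
    ring
  have h1 : qnum ((q ^ a : ℝ) ^ α) ((m:ℝ) + ((b : ℝ) * x + (b : ℝ) * (i : ℝ) / (a : ℝ)))
      = qnum (q ^ α) (((a * m + b * i : ℕ) : ℝ) + (a : ℝ) * (b : ℝ) * x)
        / qnum (q ^ α) (a : ℝ) := by
    rw [qnum_scale q α hq0 hq1 hα a ha, harg]
  have hpos1 : 0 < qnum (q ^ α) (((a * m + b * i : ℕ) : ℝ) + (a : ℝ) * (b : ℝ) * x) :=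
    qnum_pos hQ0 hQ1 (by positivity)
  have hpos2 : 0 < qnum (q ^ α) (a : ℝ) := qnum_pos hQ0 hQ1 ha'
  rw [zetaTerm, Fterm, h1, Real.log_div hpos1.ne' hpos2.ne']
  have hsign : (-1 : ℂ) ^ (a * m + b * i) = (-1) ^ m * (-1) ^ i := by
    rw [pow_add, pow_mul, pow_mul, hao.neg_one_pow, hbo.neg_one_pow]
  have hpow : ((q ^ a : ℝ) : ℂ) ^ (m * h) = (q : ℂ) ^ (a * m * h) := by
    push_cast
    rw [← pow_mul]
    ring_nf
  have hpows : (q : ℂ) ^ (i * b * h) * (q : ℂ) ^ (a * m * h)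
      = (q : ℂ) ^ ((a * m + b * i) * h) := by
    rw [← pow_add]
    congr 1
    ring
  have hexp : Complex.exp (-s *
        ((Real.log (qnum (q ^ α) (((a * m + b * i : ℕ) : ℝ) + (a : ℝ) * (b : ℝ) * x))
          - Real.log (qnum (q ^ α) (a : ℝ)) : ℝ) : ℂ))
      = Complex.exp (s * (Real.log (qnum (q ^ α) (a : ℝ)) : ℂ)) *
        Complex.exp (-s *
          (Real.log (qnum (q ^ α) (((a * m + b * i : ℕ) : ℝ) + (a : ℝ) * (b : ℝ) * x)) : ℂ)) := by
    rw [← Complex.exp_add]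
    congr 1
    push_cast
    ring
  rw [hexp, hsign, hpow, ← hpows]
  ring

lemma summable_side (q α : ℝ) (hq0 : 0 < q) (hq1 : q < 1) (hα : 0 < α) (h : ℕ) (hh : 0 < h)
    (c : ℝ) (hc : 0 < c) (s : ℂ) (a b : ℕ) (ha : 0 < a) :
    Summable (fun p : Fin a × ℕ => Fterm q α h s c (a * p.2 + b * (p.1 : ℕ))) := by
  have hQ0 : (0:ℝ) < q ^ α := Real.rpow_pos_of_pos hq0 α
  have hQ1 : q ^ α < 1 := Real.rpow_lt_one hq0.le hq1 hα
  set L : ℝ := |Real.log (qnum (q ^ α) c)| + |Real.log (1 - q ^ α)| with hLdef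
  have hLb : ∀ N : ℕ, |Real.log (qnum (q ^ α) ((N : ℝ) + c))| ≤ L := by
    intro N
    have h01 : 0 < qnum (q ^ α) c := qnum_pos hQ0 hQ1 hc
    have hposN : 0 < qnum (q ^ α) ((N : ℝ) + c) := qnum_pos hQ0 hQ1 (by positivity)
    have hmono : qnum (q ^ α) c ≤ qnum (q ^ α) ((N : ℝ) + c) := by
      have hle : (q ^ α) ^ ((N:ℝ) + c) ≤ (q ^ α) ^ c :=
        Real.rpow_le_rpow_of_exponent_ge hQ0 hQ1.le
          (by linarith [show (0:ℝ) ≤ (N:ℝ) from N.cast_nonneg])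
      rw [qnum, qnum]
      gcongr
    have hub : qnum (q ^ α) ((N : ℝ) + c) ≤ (1 - q ^ α)⁻¹ := by
      rw [qnum, div_le_iff₀ (by linarith : (0:ℝ) < 1 - q ^ α), inv_mul_cancel₀ (by linarith)]
      have := Real.rpow_nonneg hQ0.le ((N:ℝ) + c)
      linarith
    rw [abs_le]
    constructor
    · have h2 : Real.log (qnum (q ^ α) c) ≤ Real.log (qnum (q ^ α) ((N : ℝ) + c)) :=
        Real.log_le_log h01 hmono
      have h3 := neg_abs_le (Real.log (qnum (q ^ α) c))
      have h4 := abs_nonneg (Real.log (1 - q ^ α))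
      rw [hLdef]; linarith
    · have h2 : Real.log (qnum (q ^ α) ((N : ℝ) + c)) ≤ Real.log ((1 - q ^ α)⁻¹) :=
        Real.log_le_log hposN hub
      rw [Real.log_inv] at h2
      have h3 := neg_abs_le (Real.log (1 - q ^ α))
      have h4 := abs_nonneg (Real.log (qnum (q ^ α) c))
      rw [hLdef]; linarith
  set C : ℝ := Real.exp (|s.re| * L) with hCdef
  have hC0 : 0 < C := Real.exp_pos _
  apply Summable.of_norm_bounded (g := fun p : Fin a × ℕ => C * q ^ p.2)
  · have hgeo : Summable (fun m : ℕ => C * q ^ m) :=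
      (summable_geometric_of_lt_one hq0.le hq1).mul_left C
    refine (summable_prod_of_nonneg ?_).2 ⟨fun _ => hgeo, ?_⟩
    · intro p; positivity
    · exact Summable.of_finite
  · intro p
    obtain ⟨i, m⟩ := p
    set N : ℕ := a * m + b * (i : ℕ) with hN
    have hnorm : ‖Fterm q α h s c N‖
        = q ^ (N * h) * Real.exp ((-s * (Real.log (qnum (q ^ α) ((N : ℝ) + c)) : ℂ)).re) := by
      rw [Fterm, norm_mul, norm_mul, norm_pow, norm_neg, norm_one, one_pow, one_mul,
        Complex.norm_exp]
      congr 1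
      rw [norm_pow, Complex.norm_real, Real.norm_eq_abs, abs_of_pos hq0]
    have hre : (-s * (Real.log (qnum (q ^ α) ((N : ℝ) + c)) : ℂ)).re
        = -(s.re * Real.log (qnum (q ^ α) ((N : ℝ) + c))) := by
      simp [Complex.mul_re]
    have hexp_le : Real.exp ((-s * (Real.log (qnum (q ^ α) ((N : ℝ) + c)) : ℂ)).re) ≤ C := by
      rw [hre, hCdef, Real.exp_le_exp]
      calc -(s.re * Real.log (qnum (q ^ α) ((N : ℝ) + c)))
          ≤ |s.re * Real.log (qnum (q ^ α) ((N : ℝ) + c))| := neg_le_abs _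
        _ = |s.re| * |Real.log (qnum (q ^ α) ((N : ℝ) + c))| := abs_mul _ _
        _ ≤ |s.re| * L := by
            exact mul_le_mul_of_nonneg_left (hLb N) (abs_nonneg _)
    have hq_le : q ^ (N * h) ≤ q ^ m := by
      apply pow_le_pow_of_le_one hq0.le hq1.le
      calc m ≤ a * m := Nat.le_mul_of_pos_left m ha
        _ ≤ N := Nat.le_add_right _ _
        _ ≤ N * h := Nat.le_mul_of_pos_right N hh
    rw [hnorm]
    calc q ^ (N * h) * Real.exp ((-s * (Real.log (qnum (q ^ α) ((N : ℝ) + c)) : ℂ)).re)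
        ≤ q ^ m * C := by
          apply mul_le_mul hq_le hexp_le (Real.exp_pos _).le (by positivity)
      _ = C * q ^ m := mul_comm _ _

def swapEquiv (a b : ℕ) (ha : 0 < a) (hb : 0 < b) : Fin a × ℕ ≃ Fin b × ℕ where
  toFun p := (⟨p.2 % b, Nat.mod_lt _ hb⟩, a * (p.2 / b) + (p.1 : ℕ))
  invFun p := (⟨p.2 % a, Nat.mod_lt _ ha⟩, b * (p.2 / a) + (p.1 : ℕ))
  left_inv p := by
    obtain ⟨⟨i, hi⟩, m⟩ := p
    refine Prod.ext (Fin.ext ?_) ?_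
    · show (a * (m / b) + i) % a = i
      rw [Nat.mul_add_mod, Nat.mod_eq_of_lt hi]
    · show b * ((a * (m / b) + i) / a) + m % b = m
      rw [Nat.mul_add_div ha, Nat.div_eq_of_lt hi, Nat.add_zero, Nat.div_add_mod]
  right_inv p := by
    obtain ⟨⟨j, hj⟩, n⟩ := p
    refine Prod.ext (Fin.ext ?_) ?_
    · show (b * (n / a) + j) % b = j
      rw [Nat.mul_add_mod, Nat.mod_eq_of_lt hj]
    · show a * ((b * (n / a) + j) / b) + n % a = n
      rw [Nat.mul_add_div hb, Nat.div_eq_of_lt hj, Nat.add_zero, Nat.div_add_mod]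

lemma swapEquiv_index (a b : ℕ) (ha : 0 < a) (hb : 0 < b) (p : Fin a × ℕ) :
    b * (swapEquiv a b ha hb p).2 + a * ((swapEquiv a b ha hb p).1 : ℕ)
      = a * p.2 + b * (p.1 : ℕ) := by
  obtain ⟨⟨i, hi⟩, m⟩ := p
  show b * (a * (m / b) + i) + a * (m % b) = a * m + b * i
  have : b * (a * (m / b) + i) + a * (m % b) = a * (b * (m / b) + m % b) + b * i := by ring
  rw [this, Nat.div_add_mod]

lemma side (q α x : ℝ) (hq0 : 0 < q) (hq1 : q < 1) (hα : 0 < α) (h : ℕ) (hh : 0 < h)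
    (hx : 0 < x) (a b : ℕ) (ha : 0 < a) (hb : 0 < b) (hao : Odd a) (hbo : Odd b) (s : ℂ) :
    ((qnum (q ^ b) 2 : ℂ) / Complex.exp (s * (Real.log (qnum (q ^ α) (a : ℝ)) : ℂ))) *
        ∑ i ∈ Finset.range a, (-1 : ℂ) ^ i * (q : ℂ) ^ (i * b * h) *
          hqZeta (q ^ a) α h ((b : ℝ) * x + (b : ℝ) * (i : ℝ) / (a : ℝ)) s
    = (qnum (q ^ a) 2 : ℂ) * (qnum (q ^ b) 2 : ℂ) *
        ∑' p : Fin a × ℕ, Fterm q α h s ((a : ℝ) * (b : ℝ) * x) (a * p.2 + b * (p.1 : ℕ)) := by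
  have ha' : (0:ℝ) < (a:ℝ) := by exact_mod_cast ha
  have hb' : (0:ℝ) < (b:ℝ) := by exact_mod_cast hb
  set E : ℂ := Complex.exp (s * (Real.log (qnum (q ^ α) (a : ℝ)) : ℂ)) with hE
  have hE0 : E ≠ 0 := Complex.exp_ne_zero _
  have hterm : ∀ i ∈ Finset.range a,
      (-1 : ℂ) ^ i * (q : ℂ) ^ (i * b * h) *
        hqZeta (q ^ a) α h ((b : ℝ) * x + (b : ℝ) * (i : ℝ) / (a : ℝ)) s
      = (qnum (q ^ a) 2 : ℂ) * E *
          ∑' m : ℕ, Fterm q α h s ((a : ℝ) * (b : ℝ) * x) (a * m + b * i) := by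
    intro i _
    rw [hqZeta]
    have t1 : (-1 : ℂ) ^ i * (q : ℂ) ^ (i * b * h) *
        ((qnum (q ^ a) 2 : ℂ) * ∑' m : ℕ, zetaTerm (q ^ a) α h
          ((b : ℝ) * x + (b : ℝ) * (i : ℝ) / (a : ℝ)) s m)
        = (qnum (q ^ a) 2 : ℂ) *
          ∑' m : ℕ, ((-1 : ℂ) ^ i * (q : ℂ) ^ (i * b * h)) * zetaTerm (q ^ a) α h
            ((b : ℝ) * x + (b : ℝ) * (i : ℝ) / (a : ℝ)) s m := by
      rw [tsum_mul_left]
      ring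
    rw [t1]
    have t2 : ∀ m : ℕ, ((-1 : ℂ) ^ i * (q : ℂ) ^ (i * b * h)) * zetaTerm (q ^ a) α h
        ((b : ℝ) * x + (b : ℝ) * (i : ℝ) / (a : ℝ)) s m
        = E * Fterm q α h s ((a : ℝ) * (b : ℝ) * x) (a * m + b * i) := fun m =>
      term_eq q α x hq0 hq1 hα h hx a b ha hb hao hbo s i m
    rw [tsum_congr t2, tsum_mul_left]
    ring
  rw [Finset.sum_congr rfl hterm, ← Finset.mul_sum]
  have hsum : Summable (fun p : Fin a × ℕ =>
      Fterm q α h s ((a : ℝ) * (b : ℝ) * x) (a * p.2 + b * (p.1 : ℕ))) :=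
    summable_side q α hq0 hq1 hα h hh ((a : ℝ) * (b : ℝ) * x) (by positivity) s a b ha
  rw [hsum.tsum_prod, tsum_fintype]
  rw [Fin.sum_univ_eq_sum_range
    (fun i => ∑' m : ℕ, Fterm q α h s ((a : ℝ) * (b : ℝ) * x) (a * m + b * i)) a]
  field_simp


theorem stmt3 (q α x : ℝ) (hq0 : 0 < q) (hq1 : q < 1) (hα : 0 < α) (h : ℕ) (hh : 0 < h)
    (hx : 0 < x) (a b : ℕ) (ha : 0 < a) (hb : 0 < b) (hao : Odd a) (hbo : Odd b) (s : ℂ) :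
    ((qnum (q ^ b) 2 : ℂ) / Complex.exp (s * (Real.log (qnum (q ^ α) (a : ℝ)) : ℂ))) *
        ∑ i ∈ Finset.range a, (-1 : ℂ) ^ i * (q : ℂ) ^ (i * b * h) *
          hqZeta (q ^ a) α h ((b : ℝ) * x + (b : ℝ) * (i : ℝ) / (a : ℝ)) s =
      ((qnum (q ^ a) 2 : ℂ) / Complex.exp (s * (Real.log (qnum (q ^ α) (b : ℝ)) : ℂ))) *
        ∑ i ∈ Finset.range b, (-1 : ℂ) ^ i * (q : ℂ) ^ (i * a * h) *
          hqZeta (q ^ b) α h ((a : ℝ) * x + (a : ℝ) * (i : ℝ) / (b : ℝ)) s := by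
  rw [side q α x hq0 hq1 hα h hh hx a b ha hb hao hbo s,
    side q α x hq0 hq1 hα h hh hx b a hb ha hbo hao s]
  have hc : (b : ℝ) * (a : ℝ) * x = (a : ℝ) * (b : ℝ) * x := by ring
  rw [hc]
  have h2 : (∑' p : Fin a × ℕ,
        Fterm q α h s ((a : ℝ) * (b : ℝ) * x) (a * p.2 + b * (p.1 : ℕ)))
      = ∑' p : Fin b × ℕ,
        Fterm q α h s ((a : ℝ) * (b : ℝ) * x) (b * p.2 + a * (p.1 : ℕ)) := by
    rw [← Equiv.tsum_eq (swapEquiv a b ha hb)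
      (fun p : Fin b × ℕ => Fterm q α h s ((a : ℝ) * (b : ℝ) * x) (b * p.2 + a * (p.1 : ℕ)))]
    exact tsum_congr fun p => by rw [swapEquiv_index a b ha hb p]
  rw [h2]
  ring
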